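/- Let F_0 be a class of finite simple graphs that is closed under duplication and taking subdivisions. Let F be a class of weighted graphs such that (a) the underlying graph of every member of F belongs to F_0, and (b) for every G ∈ F_0 and every φ : E(G) → (0,∞), (G,φ) ∈ F. Let m be a positive integer. Then the asymptotic dimension of F is at most m − 1 if and only if there exists a function f : (0,∞) → (0,∞) such that for every ℓ > 0, every G ∈ F_0, and every function φ : E(G) → (0,ℓ], the graph (G,φ)^ℓ has an m-coloring with weak diameter in (G,φ)^ℓ at most f(ℓ). -/

import Mathlib

open scoped ENNReal

/-- The length of a walk in an edge-weighted graph: the sum of the weights of its edges. -/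
def walkLen {V : Type} {G : SimpleGraph V} (w : Sym2 V → ℝ) {x y : V} (p : G.Walk x y) : ℝ :=
  (p.edges.map w).sum

/-- The distance between two vertices of an edge-weighted graph: the infimum of the lengths
of paths between them (`⊤` if there is no such path). -/
noncomputable def wDist {V : Type} (G : SimpleGraph V) (w : Sym2 V → ℝ) (x y : V) : ℝ≥0∞ :=
  ⨅ q : {q : G.Walk x y // q.IsPath}, ENNReal.ofReal (walkLen w q.1)

lemma wDist_comm {V : Type} (G : SimpleGraph V) (w : Sym2 V → ℝ) (x y : V) :
    wDist G w x y = wDist G w y x := by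
  have key : ∀ a b : V, wDist G w a b ≤ wDist G w b a := by
    intro a b
    refine le_iInf fun q => ?_
    refine iInf_le_of_le ⟨q.1.reverse, q.2.reverse⟩ ?_
    simp [walkLen, List.sum_reverse]
  exact le_antisymm (key x y) (key y x)

/-- The power graph: two distinct vertices are adjacent iff their weighted distance
is at most `r`. -/
noncomputable def powerGraph {V : Type} (G : SimpleGraph V) (w : Sym2 V → ℝ) (r : ℝ) :
    SimpleGraph V where
  Adj x y := x ≠ y ∧ wDist G w x y ≤ ENNReal.ofReal r
  symm := ⟨by
    rintro x y ⟨hne, hle⟩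
    exact ⟨hne.symm, by rwa [wDist_comm]⟩⟩
  loopless := ⟨fun x h => h.1 rfl⟩

/-- The unit-length (hop) distance in an unweighted graph. -/
noncomputable def hopDist {V : Type} (L : SimpleGraph V) (x y : V) : ℝ≥0∞ :=
  ⨅ q : L.Walk x y, (q.length : ℝ≥0∞)

/-- Same-colour adjacency within a vertex set `A`. -/
def colorGraph {V : Type} (K : SimpleGraph V) (A : Set V) {m : ℕ} (c : V → Fin m) :
    SimpleGraph V where
  Adj x y := K.Adj x y ∧ x ∈ A ∧ y ∈ A ∧ c x = c y
  symm := ⟨by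
    rintro x y ⟨h, hx, hy, hc⟩
    exact ⟨h.symm, hy, hx, hc.symm⟩⟩
  loopless := ⟨fun x h => K.loopless.irrefl x h.1⟩

/-- The colouring `c` of the subgraph of `K` induced on `A` has weak diameter, measured by the
hop distance of `L`, at most `N`: any two vertices of a monochromatic component of `K ↾ A` are
at hop distance at most `N` in `L`. -/
def HasWeakDiamLE {V : Type} (K : SimpleGraph V) (A : Set V) (L : SimpleGraph V) {m : ℕ}
    (c : V → Fin m) (N : ℝ) : Prop :=
  ∀ x ∈ A, ∀ y ∈ A, (colorGraph K A c).Reachable x y → hopDist L x y ≤ ENNReal.ofReal N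

/-- `nbhd G w r S`: vertices joined to `S` by a path of weighted length at most `r`. -/
def nbhd {V : Type} (G : SimpleGraph V) (w : Sym2 V → ℝ) (r : ℝ) (S : Set V) : Set V :=
  {v | ∃ s ∈ S, ∃ q : G.Walk v s, q.IsPath ∧ walkLen w q ≤ r}

/-- Deleting a set of vertices (keeping them as isolated vertices of the ambient type). -/
def delVerts {V : Type} (G : SimpleGraph V) (Z : Set V) : SimpleGraph V where
  Adj x y := G.Adj x y ∧ x ∉ Z ∧ y ∉ Z
  symm := ⟨by
    rintro x y ⟨h, hx, hy⟩
    exact ⟨h.symm, hy, hx⟩⟩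
  loopless := ⟨fun x h => G.loopless.irrefl x h.1⟩

/-- A weighted graph: a finite simple graph together with positive edge weights. -/
structure WGraph : Type 1 where
  V : Type
  fin : Finite V
  G : SimpleGraph V
  w : Sym2 V → ℝ
  pos : ∀ e ∈ G.edgeSet, 0 < w e

/-- The extended metric on the vertex set of a weighted graph. -/
noncomputable def WGraph.dist (W : WGraph) : W.V → W.V → ℝ≥0∞ := wDist W.G W.w

/-- All edge weights lie in `(0, ℓ]`. -/
def WGraph.IsBounded (W : WGraph) (ℓ : ℝ) : Prop := ∀ e ∈ W.G.edgeSet, W.w e ≤ ℓ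

/-- `f` is an `n`-dimensional control function for the extended metric `d`. -/
def IsControlOn {X : Type} (d : X → X → ℝ≥0∞) (n : ℕ) (f : ℝ → ℝ) : Prop :=
  ∀ r : ℝ, 0 < r → ∃ U : Fin (n + 1) → Set (Set X),
    (∀ x : X, ∃ i, ∃ s ∈ U i, x ∈ s) ∧
    (∀ i, ∀ s ∈ U i, ∀ t ∈ U i, s ≠ t → ∀ x ∈ s, ∀ y ∈ t, ENNReal.ofReal r < d x y) ∧
    (∀ i, ∀ s ∈ U i, ∀ x ∈ s, ∀ y ∈ s, d x y ≤ ENNReal.ofReal (f r))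

/-- The asymptotic dimension of a class of weighted graphs is at most `n`. -/
def asdimLE (F : Set WGraph) (n : ℕ) : Prop :=
  ∃ f : ℝ → ℝ, (∀ x, 0 < x → 0 < f x) ∧ ∀ W ∈ F, IsControlOn W.dist n f

/-- The Assouad–Nagata dimension of a class of weighted graphs is at most `n`:
some dilation is a common `n`-dimensional control function. -/
def ANdimLE (F : Set WGraph) (n : ℕ) : Prop :=
  ∃ (f : ℝ → ℝ) (c : ℝ), 0 < c ∧ (∀ x, 0 < x → 0 < f x) ∧ (∀ x, 0 < x → f x ≤ c * x) ∧
    ∀ W ∈ F, IsControlOn W.dist n f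

/-- `H` is a minor of `G`: there are pairwise disjoint nonempty connected branch sets in `G`,
one for each vertex of `H`, with branch sets of adjacent vertices joined by an edge. -/
def IsMinorOf {α β : Type} (H : SimpleGraph β) (G : SimpleGraph α) : Prop :=
  ∃ B : β → Set α,
    (∀ h, (B h).Nonempty) ∧
    (∀ h h', h ≠ h' → Disjoint (B h) (B h')) ∧
    (∀ h, (G.induce (B h)).Connected) ∧
    (∀ h h', H.Adj h h' → ∃ a ∈ B h, ∃ b ∈ B h', G.Adj a b)
/-- A finite simple graph (with bundled vertex type). -/
structure FinGraph : Type 1 where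
  V : Type
  fin : Finite V
  G : SimpleGraph V

/-- The underlying (unweighted) finite graph of a weighted graph. -/
def WGraph.toFinGraph (W : WGraph) : FinGraph := ⟨W.V, W.fin, W.G⟩

/-- The graph obtained from `G` by subdividing the edge `uv`: the edge `uv` is replaced by a
two-edge path through one new vertex. -/
def subdivideOne {V : Type} (G : SimpleGraph V) (u v : V) : SimpleGraph (V ⊕ Unit) :=
  SimpleGraph.fromRel fun a b =>
    match a, b with
    | Sum.inl x, Sum.inl y => G.Adj x y ∧ s(x, y) ≠ s(u, v)
    | Sum.inl x, Sum.inr _ => x = u ∨ x = v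
    | _, _ => False

/-- The graph obtained from `G` by duplicating the edge `uv`: the edge `uv` is replaced by two
internally disjoint two-edge paths between `u` and `v`, through two new vertices. -/
def duplicateOne {V : Type} (G : SimpleGraph V) (u v : V) : SimpleGraph (V ⊕ Bool) :=
  SimpleGraph.fromRel fun a b =>
    match a, b with
    | Sum.inl x, Sum.inl y => G.Adj x y ∧ s(x, y) ≠ s(u, v)
    | Sum.inl x, Sum.inr _ => x = u ∨ x = v
    | _, _ => False

/-- `F0` is closed under taking subdivisions. -/
def ClosedUnderSubdivision (F0 : Set FinGraph) : Prop :=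
  ∀ A ∈ F0, ∀ u v : A.V, A.G.Adj u v →
    ∀ B : FinGraph, Nonempty (B.G ≃g subdivideOne A.G u v) → B ∈ F0

/-- `F0` is closed under duplication. -/
def ClosedUnderDuplication (F0 : Set FinGraph) : Prop :=
  ∀ A ∈ F0, ∀ u v : A.V, A.G.Adj u v →
    ∀ B : FinGraph, Nonempty (B.G ≃g duplicateOne A.G u v) → B ∈ F0
section Foundations

variable {V : Type} {G : SimpleGraph V} {w : Sym2 V → ℝ}

lemma walkLen_nil {x : V} : walkLen w (SimpleGraph.Walk.nil : G.Walk x x) = 0 := by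
  simp [walkLen]

lemma walkLen_cons {x y z : V} (h : G.Adj x y) (p : G.Walk y z) :
    walkLen w (SimpleGraph.Walk.cons h p) = w s(x, y) + walkLen w p := by
  simp [walkLen]

lemma walkLen_append {x y z : V} (p : G.Walk x y) (q : G.Walk y z) :
    walkLen w (p.append q) = walkLen w p + walkLen w q := by
  simp [walkLen, SimpleGraph.Walk.edges_append]

lemma walkLen_nonneg (hw : ∀ e ∈ G.edgeSet, 0 ≤ w e) {x y : V} (p : G.Walk x y) :
    0 ≤ walkLen w p := by
  apply List.sum_nonneg
  intro a ha
  obtain ⟨e, he, rfl⟩ := List.mem_map.mp ha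
  exact hw e (p.edges_subset_edgeSet he)

lemma list_sum_le_of_subset {α : Type*} (f : α → ℝ) (l₁ l₂ : List α) (h₁ : l₁.Nodup)
    (hsub : l₁ ⊆ l₂) (hf : ∀ a ∈ l₂, 0 ≤ f a) :
    (l₁.map f).sum ≤ (l₂.map f).sum := by
  classical
  have e1 : (l₁.map f).sum = ∑ a ∈ l₁.toFinset, f a := (List.sum_toFinset f h₁).symm
  have e2 : (l₂.dedup.map f).sum = ∑ a ∈ l₂.toFinset, f a := by
    rw [← List.sum_toFinset f l₂.nodup_dedup]
    congr 1
    ext a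
    simp [List.mem_toFinset]
  rw [e1]
  have hsub' : l₁.toFinset ⊆ l₂.toFinset := fun a ha => by
    simp only [List.mem_toFinset] at *; exact hsub ha
  calc ∑ a ∈ l₁.toFinset, f a ≤ ∑ a ∈ l₂.toFinset, f a := by
        apply Finset.sum_le_sum_of_subset_of_nonneg hsub'
        intro a ha _; exact hf a (List.mem_toFinset.mp ha)
    _ = (l₂.dedup.map f).sum := by rw [← e2]
    _ ≤ (l₂.map f).sum := by
        have : List.Sublist (l₂.dedup.map f) (l₂.map f) := (l₂.dedup_sublist).map f
        apply List.Sublist.sum_le_sum this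
        intro a ha
        obtain ⟨e, he, rfl⟩ := List.mem_map.mp ha
        exact hf e he

lemma walkLen_bypass_le [DecidableEq V] (hw : ∀ e ∈ G.edgeSet, 0 ≤ w e) {x y : V} (p : G.Walk x y) :
    walkLen w p.bypass ≤ walkLen w p := by
  classical
  apply list_sum_le_of_subset w _ _ p.bypass_isPath.isTrail.edges_nodup p.edges_bypass_subset
  intro e he
  exact hw e (p.edges_subset_edgeSet he)

lemma wDist_le_walk (hw : ∀ e ∈ G.edgeSet, 0 ≤ w e) {x y : V} (p : G.Walk x y) :
    wDist G w x y ≤ ENNReal.ofReal (walkLen w p) := by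
  classical
  haveI : DecidableEq V := Classical.decEq V
  refine le_trans (iInf_le _ ⟨p.bypass, p.bypass_isPath⟩) ?_
  exact ENNReal.ofReal_le_ofReal (walkLen_bypass_le hw p)

lemma wDist_self (hw : ∀ e ∈ G.edgeSet, 0 ≤ w e) (x : V) : wDist G w x x = 0 := by
  have := wDist_le_walk hw (SimpleGraph.Walk.nil : G.Walk x x)
  simpa [walkLen_nil] using this

lemma wDist_triangle (hw : ∀ e ∈ G.edgeSet, 0 ≤ w e) (x y z : V) :
    wDist G w x z ≤ wDist G w x y + wDist G w y z := by
  simp only [wDist]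
  rw [ENNReal.iInf_add]
  refine le_iInf fun p => ?_
  rw [ENNReal.add_iInf]
  refine le_iInf fun q => ?_
  calc wDist G w x z ≤ ENNReal.ofReal (walkLen w (p.1.append q.1)) :=
        wDist_le_walk hw _
    _ ≤ _ := by
        rw [walkLen_append]
        exact le_trans ENNReal.ofReal_add_le (by rfl)

lemma wDist_le_of_adj (hw : ∀ e ∈ G.edgeSet, 0 ≤ w e) {x y : V} (h : G.Adj x y) :
    wDist G w x y ≤ ENNReal.ofReal (w s(x, y)) := by
  have := wDist_le_walk hw (SimpleGraph.Walk.cons h SimpleGraph.Walk.nil)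
  simpa [walkLen_cons, walkLen_nil] using this

lemma exists_path_of_wDist_le [Finite V] (hw : ∀ e ∈ G.edgeSet, 0 ≤ w e) {x y : V} {b : ℝ}
    (hb : 0 ≤ b) (h : wDist G w x y ≤ ENNReal.ofReal b) :
    ∃ p : G.Walk x y, p.IsPath ∧ walkLen w p ≤ b := by
  classical
  have : Fintype V := Fintype.ofFinite V
  have hne : Nonempty {q : G.Walk x y // q.IsPath} := by
    by_contra hempty
    rw [wDist, @iInf_of_empty _ _ _ (not_nonempty_iff.mp hempty)] at h
    exact (ENNReal.ofReal_lt_top.not_ge h).elim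
  have hfin : Finite {q : G.Walk x y // q.IsPath} := by
    refine Finite.of_injective
      (fun q : {q : G.Walk x y // q.IsPath} =>
        (⟨q.1, q.2.length_lt⟩ : {p : G.Walk x y // p.length < Fintype.card V})) ?_
    intro a b hab
    have h2 : a.1 = b.1 := congrArg (fun s : {p : G.Walk x y // p.length < Fintype.card V} => s.val) hab
    exact Subtype.ext h2
  obtain ⟨q₀, hq₀⟩ := Finite.exists_min (fun q : {q : G.Walk x y // q.IsPath} => walkLen w q.1)
  have hle : ENNReal.ofReal (walkLen w q₀.1) ≤ ENNReal.ofReal b := by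
    refine le_trans ?_ h
    exact le_iInf fun q => ENNReal.ofReal_le_ofReal (hq₀ q)
  exact ⟨q₀.1, q₀.2, (ENNReal.ofReal_le_ofReal_iff hb).mp hle⟩

end Foundations
section Hop

variable {V : Type} {G : SimpleGraph V} {w : Sym2 V → ℝ}

lemma hopDist_le_walk {L : SimpleGraph V} {x y : V} (q : L.Walk x y) :
    hopDist L x y ≤ (q.length : ℝ≥0∞) :=
  iInf_le _ q

lemma hopDist_self (L : SimpleGraph V) (x : V) : hopDist L x x = 0 := by
  have := hopDist_le_walk (SimpleGraph.Walk.nil : L.Walk x x)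
  simpa using this

lemma hopDist_triangle (L : SimpleGraph V) (x y z : V) :
    hopDist L x z ≤ hopDist L x y + hopDist L y z := by
  simp only [hopDist]
  rw [ENNReal.iInf_add]
  refine le_iInf fun p => ?_
  rw [ENNReal.add_iInf]
  refine le_iInf fun q => ?_
  refine le_trans (iInf_le _ (p.append q)) ?_
  rw [SimpleGraph.Walk.length_append]
  push_cast
  rfl

lemma hopDist_le_one_of_wDist {r : ℝ} {x y : V}
    (h : wDist G w x y ≤ ENNReal.ofReal r) :
    hopDist (powerGraph G w r) x y ≤ 1 := by
  by_cases hxy : x = y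
  · subst hxy; simp [hopDist_self]
  · have hadj : (powerGraph G w r).Adj x y := ⟨hxy, h⟩
    have := hopDist_le_walk (SimpleGraph.Walk.cons hadj SimpleGraph.Walk.nil)
    simpa using this

/-- Splitting lemma: from a path longer than the budget `b`, peel off a prefix of length `≤ b`
followed by one edge, leaving a path of length at most `walkLen p - b`. -/
lemma walk_split (hw : ∀ e ∈ G.edgeSet, 0 ≤ w e) (hwℓ : ∀ e ∈ G.edgeSet, w e ≤ (ℓ : ℝ))
    {b : ℝ} (hb : 0 ≤ b) (hbℓ : b ≤ ℓ) :
    ∀ {x y : V} (p : G.Walk x y), p.IsPath → b < walkLen w p →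
    ∃ (t u : V) (p₂ : G.Walk u y), p₂.IsPath ∧
      wDist G w x t ≤ ENNReal.ofReal b ∧ wDist G w t u ≤ ENNReal.ofReal ℓ ∧
      walkLen w p₂ ≤ walkLen w p - b := by
  intro x y p
  induction p generalizing b with
  | nil => intro _ hlen; rw [walkLen_nil] at hlen; exact absurd hlen (not_lt.mpr hb)
  | @cons a c y h q ih =>
    intro hp hlen
    have hq : q.IsPath := hp.of_cons
    have hwe : w s(a, c) ≤ ℓ := hwℓ _ h
    have hwe0 : 0 ≤ w s(a, c) := hw _ h
    rw [walkLen_cons] at hlen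
    by_cases hcase : b ≤ w s(a, c)
    · refine ⟨a, c, q, hq, ?_, ?_, ?_⟩
      · rw [wDist_self hw]; positivity
      · exact le_trans (wDist_le_of_adj hw h) (ENNReal.ofReal_le_ofReal hwe)
      · rw [walkLen_cons]; linarith
    · push_neg at hcase
      obtain ⟨t, u, p₂, hp₂, hd1, hd2, hlen₂⟩ :=
        ih (b := b - w s(a, c)) (by linarith) (by linarith) hq (by linarith)
      refine ⟨t, u, p₂, hp₂, ?_, hd2, by rw [walkLen_cons]; linarith⟩
      calc wDist G w a t ≤ wDist G w a c + wDist G w c t := wDist_triangle hw a c t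
        _ ≤ ENNReal.ofReal (w s(a, c)) + ENNReal.ofReal (b - w s(a, c)) :=
            add_le_add (wDist_le_of_adj hw h) hd1
        _ = ENNReal.ofReal b := by
            rw [← ENNReal.ofReal_add hwe0 (by linarith)]
            ring_nf

/-- Chopping: a path of length at most `n·ℓ` gives hop distance at most `2n` in the power
graph at scale `ℓ`. -/
lemma hop_le_of_path (hw : ∀ e ∈ G.edgeSet, 0 < w e) {ℓ : ℝ} (hℓ : 0 < ℓ)
    (hwℓ : ∀ e ∈ G.edgeSet, w e ≤ ℓ) :
    ∀ (n : ℕ) {x y : V} (p : G.Walk x y), p.IsPath → walkLen w p ≤ n * ℓ →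
    hopDist (powerGraph G w ℓ) x y ≤ (2 * n : ℕ) := by
  have hw0 : ∀ e ∈ G.edgeSet, 0 ≤ w e := fun e he => (hw e he).le
  intro n
  induction n with
  | zero =>
    intro x y p hp hlen
    simp only [Nat.cast_zero, zero_mul] at hlen
    have : walkLen w p = 0 := le_antisymm hlen (walkLen_nonneg hw0 p)
    -- a walk of zero length with positive weights is nil
    cases p with
    | nil => simp [hopDist_self]
    | cons h q =>
      exfalso
      rw [walkLen_cons] at this
      have h1 : 0 < w s(_, _) := hw _ h
      have h2 : 0 ≤ walkLen w q := walkLen_nonneg hw0 q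
      linarith
  | succ n ih =>
    intro x y p hp hlen
    by_cases hsmall : walkLen w p ≤ ℓ
    · have h1 : hopDist (powerGraph G w ℓ) x y ≤ 1 :=
        hopDist_le_one_of_wDist (le_trans (wDist_le_walk hw0 p)
          (ENNReal.ofReal_le_ofReal hsmall))
      refine le_trans h1 ?_
      have h2 : (1 : ℝ≥0∞) ≤ ((n : ℝ≥0∞) + 1) := le_add_self
      have h3 : (1 : ℝ≥0∞) ≤ 2 * ((n : ℝ≥0∞) + 1) :=
        le_trans h2 (le_mul_of_one_le_left zero_le one_le_two)
      push_cast
      exact h3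
    · push_neg at hsmall
      obtain ⟨t, u, p₂, hp₂, hd1, hd2, hlen₂⟩ :=
        walk_split hw0 hwℓ hℓ.le (le_refl ℓ) p hp hsmall
      have hrec : hopDist (powerGraph G w ℓ) u y ≤ ((2 * n : ℕ) : ℝ≥0∞) := by
        refine ih p₂ hp₂ ?_
        push_cast at hlen ⊢
        linarith
      calc hopDist (powerGraph G w ℓ) x y
          ≤ hopDist (powerGraph G w ℓ) x t + hopDist (powerGraph G w ℓ) t y :=
            hopDist_triangle _ x t y
        _ ≤ hopDist (powerGraph G w ℓ) x t + (hopDist (powerGraph G w ℓ) t u +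
              hopDist (powerGraph G w ℓ) u y) :=
            add_le_add_right (hopDist_triangle _ t u y) _
        _ ≤ 1 + (1 + ((2 * n : ℕ) : ℝ≥0∞)) := by
            gcongr
            · exact hopDist_le_one_of_wDist hd1
            · exact hopDist_le_one_of_wDist hd2
        _ ≤ ((2 * (n + 1) : ℕ) : ℝ≥0∞) := by
            push_cast
            ring_nf
            rfl

/-- From bounded hop distance in the power graph, bounded weighted distance. -/
lemma wDist_le_of_hop (hw : ∀ e ∈ G.edgeSet, 0 ≤ w e) {r : ℝ} (hr : 0 ≤ r) {N : ℝ}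
    (hN : 0 ≤ N) {x y : V} (h : hopDist (powerGraph G w r) x y ≤ ENNReal.ofReal N) :
    wDist G w x y ≤ ENNReal.ofReal (N * r) := by
  -- first, walks in the power graph bound wDist
  have key : ∀ {a b : V} (q : (powerGraph G w r).Walk a b),
      wDist G w a b ≤ (q.length : ℝ≥0∞) * ENNReal.ofReal r := by
    intro a b q
    induction q with
    | nil => rw [wDist_self hw]; exact zero_le
    | @cons a c b hadj q ih =>
      calc wDist G w a b ≤ wDist G w a c + wDist G w c b := wDist_triangle hw a c b
        _ ≤ ENNReal.ofReal r + (q.length : ℝ≥0∞) * ENNReal.ofReal r :=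
            add_le_add hadj.2 ih
        _ = ((SimpleGraph.Walk.cons hadj q).length : ℝ≥0∞) * ENNReal.ofReal r := by
            rw [SimpleGraph.Walk.length_cons]
            push_cast
            ring
  -- hopDist is attained at a walk of minimal length
  have hne : Nonempty ((powerGraph G w r).Walk x y) := by
    by_contra hempty
    rw [hopDist, @iInf_of_empty _ _ _ (not_nonempty_iff.mp hempty)] at h
    exact (ENNReal.ofReal_lt_top.not_ge h).elim
  set S : Set ℕ := Set.range (fun q : (powerGraph G w r).Walk x y => q.length) with hS
  have hSne : S.Nonempty := Set.range_nonempty _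
  have hmem : sInf S ∈ S := Nat.sInf_mem hSne
  rw [hS, Set.mem_range] at hmem
  obtain ⟨q₀, hq₀⟩ := hmem
  have hmin : ((q₀.length : ℕ) : ℝ≥0∞) ≤ hopDist (powerGraph G w r) x y := by
    refine le_iInf fun q => ?_
    exact_mod_cast Nat.cast_le.mpr (hq₀ ▸ Nat.sInf_le (Set.mem_range_self q))
  have hlen : (q₀.length : ℝ) ≤ N := by
    have := le_trans hmin h
    rw [← ENNReal.ofReal_natCast] at this
    exact_mod_cast (ENNReal.ofReal_le_ofReal_iff hN).mp this
  calc wDist G w x y ≤ (q₀.length : ℝ≥0∞) * ENNReal.ofReal r := key q₀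
    _ ≤ ENNReal.ofReal (N * r) := by
        rw [← ENNReal.ofReal_natCast, ← ENNReal.ofReal_mul (by positivity)]
        exact ENNReal.ofReal_le_ofReal (by nlinarith [hr])

end Hop
section Forward

variable {V : Type} {G : SimpleGraph V} {w : Sym2 V → ℝ}

lemma colorGraph_reachable_same {β : Type*} {m : ℕ} {K : SimpleGraph V} {A : Set V}
    {c : V → Fin m} {S : V → β} (hstep : ∀ x y, (colorGraph K A c).Adj x y → S x = S y) {x y : V}
    (h : (colorGraph K A c).Reachable x y) : S x = S y := by
  obtain ⟨p⟩ := h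
  induction p with
  | nil => rfl
  | cons h q ih => exact (hstep _ _ h).trans ih

lemma exists_good_coloring [Finite V] (hw : ∀ e ∈ G.edgeSet, 0 < w e) {ℓ : ℝ} (hℓ : 0 < ℓ)
    (hwℓ : ∀ e ∈ G.edgeSet, w e ≤ ℓ) {m : ℕ} {D : ℝ} (hD : 0 ≤ D)
    (U : Fin m → Set (Set V))
    (hcover : ∀ x : V, ∃ i, ∃ s ∈ U i, x ∈ s)
    (hsep : ∀ i, ∀ s ∈ U i, ∀ t ∈ U i, s ≠ t → ∀ x ∈ s, ∀ y ∈ t,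
      ENNReal.ofReal ℓ < wDist G w x y)
    (hbound : ∀ i, ∀ s ∈ U i, ∀ x ∈ s, ∀ y ∈ s, wDist G w x y ≤ ENNReal.ofReal D) :
    ∃ c : V → Fin m,
      HasWeakDiamLE (powerGraph G w ℓ) Set.univ (powerGraph G w ℓ) c (2 * (D / ℓ + 1)) := by
  classical
  have hw0 : ∀ e ∈ G.edgeSet, 0 ≤ w e := fun e he => (hw e he).le
  choose i S hSU hxS using hcover
  refine ⟨i, ?_⟩
  intro x _ y _ hreach
  -- same-color adjacent vertices lie in the same control set
  have hstep : ∀ a b, (colorGraph (powerGraph G w ℓ) Set.univ i).Adj a b → S a = S b := by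
    rintro a b ⟨⟨hne, hdist⟩, -, -, hc⟩
    by_contra hST
    have := hsep (i a) (S a) (hSU a) (S b) (hc ▸ hSU b) hST a (hxS a) b (hxS b)
    exact (not_lt.mpr hdist this).elim
  have hSxy : S x = S y := colorGraph_reachable_same hstep hreach
  have hdist : wDist G w x y ≤ ENNReal.ofReal D :=
    hbound (i x) (S x) (hSU x) x (hxS x) y (hSxy ▸ hxS y)
  obtain ⟨p, hp, hplen⟩ := exists_path_of_wDist_le hw0 hD hdist
  set n₀ : ℕ := ⌈D / ℓ⌉₊ with hn₀
  have hplen' : walkLen w p ≤ (n₀ : ℝ) * ℓ := by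
    have h1 : D / ℓ ≤ (n₀ : ℝ) := Nat.le_ceil _
    have : D ≤ (n₀ : ℝ) * ℓ := by
      rw [div_le_iff₀ hℓ] at h1; linarith
    linarith
  have hhop := hop_le_of_path hw hℓ hwℓ n₀ p hp hplen'
  refine le_trans hhop ?_
  rw [← ENNReal.ofReal_natCast]
  refine ENNReal.ofReal_le_ofReal ?_
  have h2 : (n₀ : ℝ) < D / ℓ + 1 := Nat.ceil_lt_add_one (by positivity)
  push_cast
  linarith

end Forward
section Subdivide

variable {V : Type} {G : SimpleGraph V} {u v : V}

lemma subdivideOne_adj_inl_inl {a b : V} :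
    (subdivideOne G u v).Adj (Sum.inl a) (Sum.inl b) ↔ G.Adj a b ∧ s(a, b) ≠ s(u, v) := by
  rw [subdivideOne, SimpleGraph.fromRel_adj]
  constructor
  · rintro ⟨hne, h | h⟩
    · exact h
    · have h' : G.Adj b a ∧ s(b, a) ≠ s(u, v) := h
      exact ⟨h'.1.symm, by rw [Sym2.eq_swap]; exact h'.2⟩
  · intro h
    exact ⟨by simp [h.1.ne], Or.inl h⟩

lemma subdivideOne_adj_inl_inr {a : V} {t : Unit} :
    (subdivideOne G u v).Adj (Sum.inl a) (Sum.inr t) ↔ a = u ∨ a = v := by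
  rw [subdivideOne, SimpleGraph.fromRel_adj]
  constructor
  · rintro ⟨hne, h | h⟩
    · exact h
    · exact h.elim
  · intro h
    exact ⟨by simp, Or.inl h⟩

lemma subdivideOne_adj_inr {t : Unit} {z : V ⊕ Unit} :
    (subdivideOne G u v).Adj (Sum.inr t) z → ∃ a, z = Sum.inl a ∧ (a = u ∨ a = v) := by
  intro h
  match z with
  | Sum.inl a => exact ⟨a, rfl, subdivideOne_adj_inl_inr.mp h.symm⟩
  | Sum.inr t' =>
    exfalso
    rw [subdivideOne, SimpleGraph.fromRel_adj] at h
    rcases h with ⟨-, h | h⟩ <;> exact h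

/-- The new weight function after subdividing the edge `uv`. -/
noncomputable def subWeight (χ : Sym2 V → ℝ) (u v : V) : Sym2 (V ⊕ Unit) → ℝ :=
  fun e =>
    haveI := Classical.dec (Sum.inr () ∈ e)
    if Sum.inr () ∈ e then χ s(u, v) / 2
    else χ (e.map (Sum.elim id fun _ => u))

lemma subWeight_inl_inl (χ : Sym2 V → ℝ) (a b : V) :
    subWeight χ u v s(Sum.inl a, Sum.inl b) = χ s(a, b) := by
  rw [subWeight]
  have : ¬ (Sum.inr () ∈ s(Sum.inl a, Sum.inl b) : Prop) := by
    rw [Sym2.mem_iff]; rintro (h | h) <;> cases h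
  rw [if_neg this, Sym2.map_pair_eq]
  rfl

lemma subWeight_inr (χ : Sym2 V → ℝ) (a : V) (t : Unit) :
    subWeight χ u v s(Sum.inl a, Sum.inr t) = χ s(u, v) / 2 := by
  rw [subWeight, if_pos (by rw [Sym2.mem_iff]; right; rfl)]

/-- Characterization of the edges of the subdivided graph. -/
lemma subdivideOne_edge_cases {e : Sym2 (V ⊕ Unit)}
    (he : e ∈ (subdivideOne G u v).edgeSet) :
    (∃ a b, e = s(Sum.inl a, Sum.inl b) ∧ G.Adj a b ∧ s(a, b) ≠ s(u, v)) ∨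
    (∃ a, e = s(Sum.inl a, Sum.inr ()) ∧ (a = u ∨ a = v)) := by
  induction e with
  | _ z₁ z₂ =>
    rw [SimpleGraph.mem_edgeSet] at he
    match z₁, z₂ with
    | Sum.inl a, Sum.inl b =>
      obtain ⟨h1, h2⟩ := subdivideOne_adj_inl_inl.mp he
      exact Or.inl ⟨a, b, rfl, h1, h2⟩
    | Sum.inl a, Sum.inr t => exact Or.inr ⟨a, rfl, subdivideOne_adj_inl_inr.mp he⟩
    | Sum.inr t, Sum.inl a =>
      obtain ⟨a', ha', hor⟩ := subdivideOne_adj_inr he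
      obtain rfl : a = a' := by injection ha'
      exact Or.inr ⟨_, Sym2.eq_swap, hor⟩
    | Sum.inr t, Sum.inr t' =>
      obtain ⟨a, ha, -⟩ := subdivideOne_adj_inr he
      cases ha

/-- Forward walk transfer: a walk in `G` yields a walk of equal length in the subdivision. -/
lemma subdivide_walk_fwd (χ : Sym2 V → ℝ) (huv : G.Adj u v) {x y : V} (p : G.Walk x y) :
    ∃ p' : (subdivideOne G u v).Walk (Sum.inl x) (Sum.inl y),
      walkLen (subWeight χ u v) p' = walkLen χ p := by
  induction p with
  | nil => exact ⟨SimpleGraph.Walk.nil, by simp [walkLen_nil]⟩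
  | @cons a c y h q ih =>
    obtain ⟨q', hq'⟩ := ih
    by_cases hedge : s(a, c) = s(u, v)
    · -- go through the subdivision vertex
      have hac : a ≠ c := h.ne
      have hmem : a = u ∨ a = v := by
        rcases Sym2.eq_iff.mp hedge with ⟨h1, h2⟩ | ⟨h1, h2⟩
        · exact Or.inl h1
        · exact Or.inr h1
      have hmem' : c = u ∨ c = v := by
        rcases Sym2.eq_iff.mp hedge with ⟨h1, h2⟩ | ⟨h1, h2⟩
        · exact Or.inr h2
        · exact Or.inl h2
      have e1 : (subdivideOne G u v).Adj (Sum.inl a) (Sum.inr ()) :=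
        subdivideOne_adj_inl_inr.mpr hmem
      have e2 : (subdivideOne G u v).Adj (Sum.inr ()) (Sum.inl c) :=
        ((subdivideOne_adj_inl_inr (a := c)).mpr hmem').symm
      refine ⟨SimpleGraph.Walk.cons e1 (SimpleGraph.Walk.cons e2 q'), ?_⟩
      rw [walkLen_cons, walkLen_cons, hq', walkLen_cons]
      have h1 : subWeight χ u v s(Sum.inl a, Sum.inr ()) = χ s(u, v) / 2 := subWeight_inr χ a ()
      have h2 : subWeight χ u v s(Sum.inr (), Sum.inl c) = χ s(u, v) / 2 := by
        rw [Sym2.eq_swap]; exact subWeight_inr χ c ()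
      rw [h1, h2, hedge]
      ring
    · have e1 : (subdivideOne G u v).Adj (Sum.inl a) (Sum.inl c) :=
        subdivideOne_adj_inl_inl.mpr ⟨h, hedge⟩
      refine ⟨SimpleGraph.Walk.cons e1 q', ?_⟩
      rw [walkLen_cons, hq', walkLen_cons, subWeight_inl_inl]

/-- Backward walk transfer: a walk in the subdivision between original vertices yields a
walk in `G` of no greater length. -/
lemma subdivide_walk_bwd (χ : Sym2 V → ℝ) (huv : G.Adj u v) (hw0 : 0 ≤ χ s(u, v)) :
    ∀ (n : ℕ) {z₁ z₂ : V ⊕ Unit} (p' : (subdivideOne G u v).Walk z₁ z₂), p'.length ≤ n →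
    ∀ {x y : V}, z₁ = Sum.inl x → z₂ = Sum.inl y →
    ∃ p : G.Walk x y, walkLen χ p ≤ walkLen (subWeight χ u v) p' := by
  intro n
  induction n with
  | zero =>
    intro z₁ z₂ p' hlen x y h1 h2
    cases p' with
    | nil =>
      obtain rfl : x = y := by rw [h1] at h2; injection h2
      exact ⟨SimpleGraph.Walk.nil, by simp [walkLen_nil]⟩
    | cons h q => simp at hlen
  | succ n ih =>
    intro z₁ z₂ p' hlen x y h1 h2
    cases p' with
    | nil =>
      obtain rfl : x = y := by rw [h1] at h2; injection h2
      exact ⟨SimpleGraph.Walk.nil, by simp [walkLen_nil]⟩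
    | @cons _ c _ hadj q =>
      subst h1
      match c, hadj with
      | Sum.inl b, hadj =>
        obtain ⟨h1, -⟩ := subdivideOne_adj_inl_inl.mp hadj
        have hlq : q.length ≤ n := by
          simp only [SimpleGraph.Walk.length_cons] at hlen; omega
        obtain ⟨p, hp⟩ := ih q hlq rfl h2
        refine ⟨SimpleGraph.Walk.cons h1 p, ?_⟩
        rw [walkLen_cons, walkLen_cons, subWeight_inl_inl]
        linarith
      | Sum.inr t, hadj =>
        -- the walk enters the subdivision vertex; the next step must leave it
        have hx : x = u ∨ x = v := subdivideOne_adj_inl_inr.mp (by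
          cases t; exact hadj)
        cases q with
        | nil => exact absurd h2 (by simp)
        | @cons _ d _ hadj2 q2 =>
          obtain ⟨b, rfl, hb⟩ := subdivideOne_adj_inr hadj2
          have hlen2 : q2.length ≤ n := by
            simp only [SimpleGraph.Walk.length_cons] at hlen
            omega
          obtain ⟨p, hp⟩ := ih q2 hlen2 rfl h2
          have hw1 : subWeight χ u v s(Sum.inl x, Sum.inr t) = χ s(u, v) / 2 := by
            cases t; exact subWeight_inr χ x ()
          have hw2 : subWeight χ u v s(Sum.inr t, Sum.inl b) = χ s(u, v) / 2 := by
            cases t; rw [Sym2.eq_swap]; exact subWeight_inr χ b ()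
          by_cases hxb : x = b
          · subst hxb
            refine ⟨p, ?_⟩
            rw [walkLen_cons, walkLen_cons, hw1, hw2]
            linarith
          · have hedge : s(x, b) = s(u, v) := by
              rcases hx with rfl | rfl <;> rcases hb with rfl | rfl <;>
                first
                  | exact absurd rfl hxb
                  | rfl
                  | exact Sym2.eq_swap
            have hadj3 : G.Adj x b := by
              rcases hx with rfl | rfl <;> rcases hb with rfl | rfl <;>
                first
                  | exact absurd rfl hxb
                  | exact huv
                  | exact huv.symm
            refine ⟨SimpleGraph.Walk.cons hadj3 p, ?_⟩
            rw [walkLen_cons, walkLen_cons, walkLen_cons, hw1, hw2, hedge]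
            linarith

end Subdivide
section SubdivideDist

variable {V : Type} {G : SimpleGraph V} {u v : V}

lemma subWeight_pos {χ : Sym2 V → ℝ} (hpos : ∀ e ∈ G.edgeSet, 0 < χ e) (huv : G.Adj u v) :
    ∀ e ∈ (subdivideOne G u v).edgeSet, 0 < subWeight χ u v e := by
  intro e he
  rcases subdivideOne_edge_cases he with ⟨a, b, rfl, h1, h2⟩ | ⟨a, rfl, h1⟩
  · rw [subWeight_inl_inl]; exact hpos _ h1
  · rw [subWeight_inr]
    have := hpos _ (G.mem_edgeSet.mpr huv)
    linarith

lemma subdivide_wDist_eq (χ : Sym2 V → ℝ) (hpos : ∀ e ∈ G.edgeSet, 0 < χ e)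
    (huv : G.Adj u v) (x y : V) :
    wDist (subdivideOne G u v) (subWeight χ u v) (Sum.inl x) (Sum.inl y) = wDist G χ x y := by
  have hpos' := subWeight_pos hpos huv
  have hnn : ∀ e ∈ G.edgeSet, 0 ≤ χ e := fun e he => (hpos e he).le
  have hnn' : ∀ e ∈ (subdivideOne G u v).edgeSet, 0 ≤ subWeight χ u v e :=
    fun e he => (hpos' e he).le
  apply le_antisymm
  · refine le_iInf fun q => ?_
    obtain ⟨p', hp'⟩ := subdivide_walk_fwd χ huv q.1
    exact hp' ▸ wDist_le_walk hnn' p'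
  · refine le_iInf fun q => ?_
    obtain ⟨p, hp⟩ := subdivide_walk_bwd χ huv (hnn _ (G.mem_edgeSet.mpr huv)) q.1.length q.1 (le_refl _) rfl rfl
    exact le_trans (wDist_le_walk hnn p) (ENNReal.ofReal_le_ofReal hp)

end SubdivideDist

section Iterate

/-- One full pass: repeatedly subdivide until all weights are at most `s`. -/
lemma subdivide_until (F0 : Set FinGraph) (hsub : ClosedUnderSubdivision F0) {s : ℝ}
    (hs : 0 < s) :
    ∀ (k : ℕ) (C : FinGraph), C ∈ F0 → ∀ χ : Sym2 C.V → ℝ,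
      (∀ e ∈ C.G.edgeSet, 0 < χ e) → (∀ e ∈ C.G.edgeSet, χ e ≤ 2 * s) →
      {e ∈ C.G.edgeSet | s < χ e}.ncard ≤ k →
      ∃ B ∈ F0, ∃ (j : C.V → B.V) (ψ : Sym2 B.V → ℝ),
        (∀ e ∈ B.G.edgeSet, 0 < ψ e) ∧ (∀ e ∈ B.G.edgeSet, ψ e ≤ s) ∧
        ∀ x y, wDist B.G ψ (j x) (j y) = wDist C.G χ x y := by
  intro k
  induction k with
  | zero =>
    intro C hC χ hpos hbnd hcard
    refine ⟨C, hC, id, χ, hpos, ?_, fun x y => rfl⟩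
    intro e he
    by_contra hgt
    push_neg at hgt
    have hne : {e ∈ C.G.edgeSet | s < χ e}.Nonempty := ⟨e, he, hgt⟩
    haveI := C.fin
    have hfin : {e ∈ C.G.edgeSet | s < χ e}.Finite := Set.toFinite _
    have := hne.ncard_pos hfin
    omega
  | succ k ih =>
    intro C hC χ hpos hbnd hcard
    by_cases hall : ∀ e ∈ C.G.edgeSet, χ e ≤ s
    · exact ⟨C, hC, id, χ, hpos, hall, fun x y => rfl⟩
    · push_neg at hall
      obtain ⟨e₀, he₀, hgt⟩ := hall
      obtain ⟨u, v, rfl⟩ : ∃ a b, e₀ = s(a, b) :=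
        Sym2.inductionOn e₀ (fun a b => ⟨a, b, rfl⟩)
      have huv : C.G.Adj u v := he₀
      haveI := C.fin
      -- the subdivided graph
      set C' : FinGraph := ⟨C.V ⊕ Unit, by infer_instance, subdivideOne C.G u v⟩ with hC'def
      have hC' : C' ∈ F0 := hsub C hC u v huv C' ⟨(SimpleGraph.Iso.refl : C'.G ≃g C'.G)⟩
      set χ' : Sym2 (C.V ⊕ Unit) → ℝ := subWeight χ u v with hχ'def
      have hpos' : ∀ e ∈ C'.G.edgeSet, 0 < χ' e := subWeight_pos hpos huv
      have hbnd' : ∀ e ∈ C'.G.edgeSet, χ' e ≤ 2 * s := by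
        intro e he
        rcases subdivideOne_edge_cases he with ⟨a, b, rfl, h1, h2⟩ | ⟨a, rfl, h1⟩
        · rw [hχ'def, subWeight_inl_inl]; exact hbnd _ h1
        · rw [hχ'def, subWeight_inr]
          have := hbnd _ (C.G.mem_edgeSet.mpr huv)
          linarith
      have hcard' : {e ∈ C'.G.edgeSet | s < χ' e}.ncard ≤ k := by
        have hsubset : {e ∈ C'.G.edgeSet | s < χ' e} ⊆
            Sym2.map Sum.inl '' ({e ∈ C.G.edgeSet | s < χ e} \ {s(u, v)}) := by
          rintro e ⟨he, hse⟩
          rcases subdivideOne_edge_cases he with ⟨a, b, rfl, h1, h2⟩ | ⟨a, rfl, h1⟩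
          · refine ⟨s(a, b), ⟨⟨h1, ?_⟩, ?_⟩, ?_⟩
            · rwa [hχ'def, subWeight_inl_inl] at hse
            · simpa using h2
            · rw [Sym2.map_pair_eq]
          · exfalso
            rw [hχ'def, subWeight_inr] at hse
            have := hbnd _ (C.G.mem_edgeSet.mpr huv)
            linarith
        have h1 : {e ∈ C'.G.edgeSet | s < χ' e}.ncard ≤
            (Sym2.map Sum.inl '' ({e ∈ C.G.edgeSet | s < χ e} \ {s(u, v)})).ncard :=
          Set.ncard_le_ncard hsubset (Set.toFinite _)
        have h2 : (Sym2.map (Sum.inl : C.V → C.V ⊕ Unit) '' ({e ∈ C.G.edgeSet | s < χ e} \ {s(u, v)})).ncard ≤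
            ({e ∈ C.G.edgeSet | s < χ e} \ {s(u, v)}).ncard :=
          Set.ncard_image_le (Set.toFinite _)
        have h3 : ({e ∈ C.G.edgeSet | s < χ e} \ {s(u, v)}).ncard <
            {e ∈ C.G.edgeSet | s < χ e}.ncard :=
          Set.ncard_diff_singleton_lt_of_mem ⟨he₀, hgt⟩ (Set.toFinite _)
        omega
      obtain ⟨B, hB, j, ψ, h1, h2, h3⟩ := ih C' hC' χ' hpos' hbnd' hcard'
      refine ⟨B, hB, fun x => j (Sum.inl x), ψ, h1, h2, fun x y => ?_⟩
      rw [h3 (Sum.inl x) (Sum.inl y)]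
      exact subdivide_wDist_eq χ hpos huv x y

/-- Full subdivision: reduce all weights below `r` while preserving distances. -/
lemma subdivide_full (F0 : Set FinGraph) (hsub : ClosedUnderSubdivision F0) {r : ℝ}
    (hr : 0 < r) :
    ∀ (N : ℕ) (C : FinGraph), C ∈ F0 → ∀ χ : Sym2 C.V → ℝ,
      (∀ e ∈ C.G.edgeSet, 0 < χ e) → (∀ e ∈ C.G.edgeSet, χ e ≤ r * 2 ^ N) →
      ∃ B ∈ F0, ∃ (j : C.V → B.V) (ψ : Sym2 B.V → ℝ),
        (∀ e ∈ B.G.edgeSet, 0 < ψ e) ∧ (∀ e ∈ B.G.edgeSet, ψ e ≤ r) ∧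
        ∀ x y, wDist B.G ψ (j x) (j y) = wDist C.G χ x y := by
  intro N
  induction N with
  | zero =>
    intro C hC χ hpos hbnd
    exact ⟨C, hC, id, χ, hpos, by simpa using hbnd, fun x y => rfl⟩
  | succ N ih =>
    intro C hC χ hpos hbnd
    have hs : (0 : ℝ) < r * 2 ^ N := by positivity
    obtain ⟨B, hB, j, ψ, h1, h2, h3⟩ :=
      subdivide_until F0 hsub hs {e ∈ C.G.edgeSet | r * 2 ^ N < χ e}.ncard C hC χ hpos
        (by intro e he; have := hbnd e he; rw [pow_succ] at this; linarith) (le_refl _)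
    obtain ⟨B', hB', j', ψ', h1', h2', h3'⟩ := ih B hB ψ h1 h2
    exact ⟨B', hB', fun x => j' (j x), ψ', h1', h2', fun x y => (h3' _ _).trans (h3 x y)⟩

end Iterate
lemma colorGraph_reachable_color {V : Type} {m : ℕ} {K : SimpleGraph V} {A : Set V}
    {c : V → Fin m} {x y : V} (h : (colorGraph K A c).Reachable x y) : c x = c y :=
  colorGraph_reachable_same (S := c) (fun _ _ hadj => hadj.2.2.2) h
/-- Theorem (Theorem `weighted_ad_wd_equiv`): let `F₀` be closed under duplication and taking
subdivisions, and let `F` be the class of all weighted graphs with underlying graphs in `F₀`.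
The asymptotic dimension of `F` is at most `m - 1` iff there is a function `f` such that for
every `ℓ > 0`, every `G ∈ F₀` and every `φ : E(G) → (0,ℓ]`, the graph `(G,φ)^ℓ` has an
`m`-colouring with weak diameter in `(G,φ)^ℓ` at most `f(ℓ)`. -/
theorem weighted_ad_wd_equiv (F0 : Set FinGraph)
    (hdup : ClosedUnderDuplication F0) (hsub : ClosedUnderSubdivision F0)
    (F : Set WGraph) (hFF0 : ∀ W ∈ F, W.toFinGraph ∈ F0)
    (hall : ∀ A ∈ F0, ∀ (φ : Sym2 A.V → ℝ) (hφ : ∀ e ∈ A.G.edgeSet, 0 < φ e),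
      WGraph.mk A.V A.fin A.G φ hφ ∈ F)
    (m : ℕ) (hm : 0 < m) :
    asdimLE F (m - 1) ↔
      ∃ f : ℝ → ℝ, (∀ x, 0 < x → 0 < f x) ∧
        ∀ ℓ : ℝ, 0 < ℓ → ∀ A ∈ F0, ∀ φ : Sym2 A.V → ℝ,
          (∀ e ∈ A.G.edgeSet, 0 < φ e ∧ φ e ≤ ℓ) →
          ∃ c : A.V → Fin m,
            HasWeakDiamLE (powerGraph A.G φ ℓ) Set.univ (powerGraph A.G φ ℓ) c (f ℓ) := by

  have hmm : m - 1 + 1 = m := Nat.succ_pred_eq_of_pos hm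
  constructor
  · -- asymptotic dimension bound gives colorings
    rintro ⟨f, hfpos, hctrl⟩
    refine ⟨fun ℓ => 2 * (f ℓ / ℓ + 1), ?_, ?_⟩
    · intro x hx
      have := hfpos x hx
      positivity
    · intro ℓ hℓ A hA φ hφ
      haveI := A.fin
      have hWF : WGraph.mk A.V A.fin A.G φ (fun e he => (hφ e he).1) ∈ F :=
        hall A hA φ (fun e he => (hφ e he).1)
      obtain ⟨U, hcover, hsep, hbound⟩ :=
        hctrl (WGraph.mk A.V A.fin A.G φ (fun e he => (hφ e he).1)) hWF ℓ hℓ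
      refine exists_good_coloring (fun e he => (hφ e he).1) hℓ (fun e he => (hφ e he).2)
        (hfpos ℓ hℓ).le (fun i => U (Fin.cast hmm.symm i)) ?_ ?_ ?_
      · intro x
        obtain ⟨i, s, hs, hx⟩ := hcover x
        exact ⟨Fin.cast hmm i, s, hs, hx⟩
      · intro i s hs t ht hst x hx y hy
        exact hsep (Fin.cast hmm.symm i) s hs t ht hst x hx y hy
      · intro i s hs x hx y hy
        exact hbound (Fin.cast hmm.symm i) s hs x hx y hy
  · -- colorings give asymptotic dimension bound
    rintro ⟨f, hfpos, hcol⟩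
    refine ⟨fun r => f r * r + r, ?_, ?_⟩
    · intro x hx
      have := hfpos x hx
      positivity
    · intro W hWF r hr
      haveI := W.fin
      have hA : W.toFinGraph ∈ F0 := hFF0 W hWF
      -- find a power-of-two bound on the weights
      have hbddM : ∃ M : ℝ, ∀ e ∈ W.G.edgeSet, W.w e ≤ M := by
        have hfin : (W.w '' W.G.edgeSet).Finite := Set.toFinite _
        obtain ⟨M, hM⟩ := hfin.bddAbove
        exact ⟨M, fun e he => hM ⟨e, he, rfl⟩⟩
      obtain ⟨M, hM⟩ := hbddM
      obtain ⟨N, hN⟩ : ∃ N : ℕ, M / r < 2 ^ N := pow_unbounded_of_one_lt (M / r) one_lt_two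
      have hbnd : ∀ e ∈ W.G.edgeSet, W.w e ≤ r * 2 ^ N := by
        intro e he
        have h1 := hM e he
        have h2 : M < r * 2 ^ N := by
          rw [div_lt_iff₀ hr] at hN; linarith
        linarith
      obtain ⟨B, hB, j, ψ, hψpos, hψbnd, hdist⟩ :=
        subdivide_full F0 hsub hr N W.toFinGraph hA W.w W.pos hbnd
      haveI := B.fin
      obtain ⟨c, hc⟩ := hcol r hr B hB ψ (fun e he => ⟨hψpos e he, hψbnd e he⟩)
      set K := colorGraph (powerGraph B.G ψ r) Set.univ c with hKdef
      set Cl : B.V → Set W.V := fun t => {x | K.Reachable t (j x)} with hCldef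
      refine ⟨fun i => {S | ∃ t : B.V, c t = Fin.cast hmm i ∧ S = Cl t}, ?_, ?_, ?_⟩
      · intro x
        refine ⟨Fin.cast hmm.symm (c (j x)), Cl (j x), ⟨j x, rfl, rfl⟩, ?_⟩
        exact SimpleGraph.Reachable.refl _
      · rintro i s ⟨a, hca, rfl⟩ t ⟨b, hcb, rfl⟩ hst x hx y hy
        by_contra hle
        push_neg at hle
        have hxa : K.Reachable a (j x) := hx
        have hyb : K.Reachable b (j y) := hy
        have hdxy : wDist B.G ψ (j x) (j y) ≤ ENNReal.ofReal r := by
          rw [hdist x y]; exact hle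
        have hcx : c (j x) = c a := (colorGraph_reachable_color hxa).symm
        have hcy : c (j y) = c b := (colorGraph_reachable_color hyb).symm
        have hreach : K.Reachable (j x) (j y) := by
          by_cases hxy : j x = j y
          · rw [hxy]
          · refine SimpleGraph.Adj.reachable ?_
            refine ⟨⟨hxy, hdxy⟩, Set.mem_univ _, Set.mem_univ _, ?_⟩
            rw [hcx, hcy, hca, hcb]
        have hab : K.Reachable a b := (hxa.trans hreach).trans hyb.symm
        refine hst ?_
        ext z
        constructor
        · intro hz; exact hab.symm.trans hz
        · intro hz; exact hab.trans hz
      · rintro i s ⟨a, hca, rfl⟩ x hx y hy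
        have hreach : K.Reachable (j x) (j y) :=
          (SimpleGraph.Reachable.symm hx).trans hy
        have hhop := hc (j x) (Set.mem_univ _) (j y) (Set.mem_univ _) hreach
        have hwd : wDist B.G ψ (j x) (j y) ≤ ENNReal.ofReal (f r * r) :=
          wDist_le_of_hop (fun e he => (hψpos e he).le) hr.le (hfpos r hr).le hhop
        have hW : W.dist x y ≤ ENNReal.ofReal (f r * r) :=
          le_trans (le_of_eq (hdist x y).symm) hwd
        refine le_trans hW (ENNReal.ofReal_le_ofReal ?_)
        show f r * r ≤ f r * r + r
        linarith
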